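/- For every integer r ≥ 0 there exists a constant C > 0, depending only on r, with the following property: for all real numbers a < b, every continuously differentiable function ψ : [a,b] → ℝ, and every real polynomial q of degree at most r satisfying ∫_a^b (ψ(t) − q(t))·p(t) dt = 0 for every real polynomial p of degree at most r, one has ∫_a^b q′(t)² dt ≤ C² ∫_a^b ψ′(t)² dt. -/

import Mathlib

open Polynomial intervalIntegral MeasureTheory Set

set_option maxHeartbeats 1000000

noncomputable def polyInner (n : ℕ) : Polynomial.degreeLT ℝ n → Polynomial.degreeLT ℝ n → ℝ :=
  fun p q => ∫ t in (0:ℝ)..1, (p : ℝ[X]).eval t * (q : ℝ[X]).eval t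

lemma poly_ii (p q : ℝ[X]) (a b : ℝ) :
    IntervalIntegrable (fun t => p.eval t * q.eval t) volume a b :=
  ((p.continuous_aeval.mul q.continuous_aeval)).intervalIntegrable a b

noncomputable def polyCore (n : ℕ) : InnerProductSpace.Core ℝ (Polynomial.degreeLT ℝ n) where
  inner := polyInner n
  conj_inner_symm p q := by simp [polyInner, mul_comm]
  re_inner_nonneg p := by
    simp only [polyInner, RCLike.re_to_real]
    apply intervalIntegral.integral_nonneg (by norm_num)
    intro u _; exact mul_self_nonneg _
  add_left p q s := by
    simp only [polyInner, Submodule.coe_add, Polynomial.eval_add, add_mul]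
    exact intervalIntegral.integral_add (poly_ii _ _ _ _) (poly_ii _ _ _ _)
  smul_left p q c := by
    simp only [polyInner, SetLike.val_smul, Polynomial.eval_smul, smul_eq_mul, mul_assoc,
      RCLike.conj_to_real]
    rw [intervalIntegral.integral_const_mul]
  definite p h := by
    by_contra hp
    have hp0 : (p : ℝ[X]) ≠ 0 := fun h0 => hp (Submodule.coe_eq_zero.mp h0)
    have hroots : Set.Finite {x | (p : ℝ[X]).IsRoot x} := Polynomial.finite_setOf_isRoot hp0
    obtain ⟨c, hc, hcr⟩ : ∃ c ∈ Set.Icc (0:ℝ) 1, (p : ℝ[X]).eval c ≠ 0 := by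
      by_contra hall
      push_neg at hall
      exact ((Set.Icc_infinite (by norm_num : (0:ℝ) < 1)).mono
        (fun x hx => hall x hx)) hroots
    have hpos : 0 < ∫ t in (0:ℝ)..1, (p : ℝ[X]).eval t * (p : ℝ[X]).eval t := by
      apply intervalIntegral.integral_pos (by norm_num)
      · exact ((p : ℝ[X]).continuous_aeval.mul (p : ℝ[X]).continuous_aeval).continuousOn
      · intro x _; exact mul_self_nonneg _
      · exact ⟨c, hc, mul_self_pos.mpr hcr⟩
    have h' : polyInner n p p = 0 := h
    rw [polyInner] at h'
    rw [h'] at hpos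
    exact lt_irrefl 0 hpos

lemma deriv_mem {n : ℕ} : ∀ q ∈ Polynomial.degreeLT ℝ n,
    Polynomial.derivative q ∈ Polynomial.degreeLT ℝ n := by
  intro q hq
  rw [Polynomial.mem_degreeLT] at *
  exact lt_of_le_of_lt q.degree_derivative_le hq

lemma mem_degLT {r : ℕ} {q : ℝ[X]} (hq : q.natDegree ≤ r) : q ∈ Polynomial.degreeLT ℝ (r+1) := by
  rw [Polynomial.mem_degreeLT]
  exact lt_of_le_of_lt q.degree_le_natDegree (by exact_mod_cast Nat.lt_succ_of_le hq)

instance (n : ℕ) : FiniteDimensional ℝ (Polynomial.degreeLT ℝ n) :=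
  Module.Finite.of_basis (Module.Basis.ofEquivFun (Polynomial.degreeLTEquiv ℝ n))

lemma inverse_one (r : ℕ) : ∃ C : ℝ, 0 < C ∧ ∀ q : ℝ[X], q.natDegree ≤ r →
    (∫ t in (0:ℝ)..1, (Polynomial.derivative q).eval t ^ 2)
      ≤ C^2 * ∫ t in (0:ℝ)..1, q.eval t ^ 2 := by
  letI c := polyCore (r+1)
  letI : NormedAddCommGroup (Polynomial.degreeLT ℝ (r+1)) := c.toNormedAddCommGroup
  letI : InnerProductSpace ℝ (Polynomial.degreeLT ℝ (r+1)) := InnerProductSpace.ofCore c.toCore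
  set D : Polynomial.degreeLT ℝ (r+1) →ₗ[ℝ] Polynomial.degreeLT ℝ (r+1) :=
    (Polynomial.derivative (R := ℝ)).restrict (fun q hq => deriv_mem q hq) with hD
  have hDc : Continuous D := D.continuous_of_finiteDimensional
  obtain ⟨C, hC0, hCb⟩ : ∃ C : ℝ, 0 < C ∧ ∀ v, ‖D v‖ ≤ C * ‖v‖ :=
    SemilinearMapClass.bound_of_continuous D hDc
  refine ⟨C, hC0, fun q hq => ?_⟩
  set v : Polynomial.degreeLT ℝ (r+1) := ⟨q, mem_degLT hq⟩ with hv
  have h1 : ‖D v‖^2 ≤ (C * ‖v‖)^2 := by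
    have := hCb v
    nlinarith [norm_nonneg (D v), norm_nonneg v]
  have e1 : ‖D v‖^2 = ∫ t in (0:ℝ)..1, (Polynomial.derivative q).eval t ^ 2 := by
    rw [← real_inner_self_eq_norm_sq]
    have : (inner ℝ (D v) (D v) : ℝ) = polyInner (r+1) (D v) (D v) := rfl
    rw [this, polyInner]
    congr 1; ext t; rw [sq]; rfl
  have e2 : ‖v‖^2 = ∫ t in (0:ℝ)..1, q.eval t ^ 2 := by
    rw [← real_inner_self_eq_norm_sq]
    have : (inner ℝ v v : ℝ) = polyInner (r+1) v v := rfl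
    rw [this, polyInner]
    congr 1; ext t; rw [sq]
  calc (∫ t in (0:ℝ)..1, (Polynomial.derivative q).eval t ^ 2) ≤ (C * ‖v‖)^2 := e1 ▸ h1
    _ = C^2 * ‖v‖^2 := by ring
    _ = C^2 * ∫ t in (0:ℝ)..1, q.eval t ^ 2 := by rw [e2]

lemma inverse_scaled (r : ℕ) : ∃ C : ℝ, 0 < C ∧ ∀ a b : ℝ, a < b → ∀ q : ℝ[X],
    q.natDegree ≤ r →
    (∫ t in a..b, (Polynomial.derivative q).eval t ^ 2)
      ≤ C^2 / (b-a)^2 * ∫ t in a..b, q.eval t ^ 2 := by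
  obtain ⟨C, hC0, hC⟩ := inverse_one r
  refine ⟨C, hC0, fun a b hab q hq => ?_⟩
  have hba : (0:ℝ) < b - a := sub_pos.mpr hab
  have hba' : b - a ≠ 0 := ne_of_gt hba
  set L : ℝ[X] := Polynomial.C (b-a) * Polynomial.X + Polynomial.C a with hL
  set p : ℝ[X] := q.comp L with hp
  have hLdeg : L.natDegree = 1 := Polynomial.natDegree_linear hba'
  have hpdeg : p.natDegree ≤ r := by
    rw [hp, Polynomial.natDegree_comp, hLdeg, mul_one]; exact hq
  have hLev : ∀ t : ℝ, L.eval t = a + (b-a) * t := by intro t; simp [hL]; ring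
  have hpev : ∀ t : ℝ, p.eval t = q.eval (a + (b-a) * t) := by
    intro t; rw [hp, Polynomial.eval_comp, hLev]
  have hLder : Polynomial.derivative L = Polynomial.C (b-a) := by
    simp [hL]
  have hpder : ∀ t : ℝ, (Polynomial.derivative p).eval t
      = (b-a) * (Polynomial.derivative q).eval (a + (b-a) * t) := by
    intro t
    rw [hp, Polynomial.derivative_comp, hLder]
    simp [hLev t]
  have e1 := intervalIntegral.integral_comp_add_mul
    (fun x => (Polynomial.derivative q).eval x ^ 2) hba' a (a := 0) (b := 1)
  rw [show a+(b-a)*0 = a by ring, show a+(b-a)*1 = b by ring, smul_eq_mul] at e1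
  have e2 := intervalIntegral.integral_comp_add_mul (fun x => q.eval x ^ 2) hba' a (a := 0) (b := 1)
  rw [show a+(b-a)*0 = a by ring, show a+(b-a)*1 = b by ring, smul_eq_mul] at e2
  have h1 : (∫ t in (0:ℝ)..1, (Polynomial.derivative p).eval t ^ 2)
      = (b-a) * ∫ x in a..b, (Polynomial.derivative q).eval x ^ 2 := by
    calc (∫ t in (0:ℝ)..1, (Polynomial.derivative p).eval t ^ 2)
        = ∫ t in (0:ℝ)..1, (b-a)^2 * ((Polynomial.derivative q).eval (a + (b-a)*t) ^ 2) :=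
          intervalIntegral.integral_congr (fun t _ => by rw [hpder t]; ring)
      _ = (b-a)^2 * ∫ t in (0:ℝ)..1, (Polynomial.derivative q).eval (a + (b-a)*t) ^ 2 :=
          intervalIntegral.integral_const_mul _ _
      _ = (b-a)^2 * ((b-a)⁻¹ * ∫ x in a..b, (Polynomial.derivative q).eval x ^ 2) := by rw [e1]
      _ = (b-a) * ∫ x in a..b, (Polynomial.derivative q).eval x ^ 2 := by
          field_simp
  have h2 : (∫ t in (0:ℝ)..1, p.eval t ^ 2)
      = (b-a)⁻¹ * ∫ x in a..b, q.eval x ^ 2 := by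
    calc (∫ t in (0:ℝ)..1, p.eval t ^ 2)
        = ∫ t in (0:ℝ)..1, q.eval (a + (b-a)*t) ^ 2 :=
          intervalIntegral.integral_congr (fun t _ => by rw [hpev t])
      _ = (b-a)⁻¹ * ∫ x in a..b, q.eval x ^ 2 := e2
  have key := hC p hpdeg
  rw [h1, h2] at key
  calc (∫ t in a..b, (Polynomial.derivative q).eval t ^ 2)
      = (b-a)⁻¹ * ((b-a) * ∫ t in a..b, (Polynomial.derivative q).eval t ^ 2) := by
        rw [← mul_assoc, inv_mul_cancel₀ hba', one_mul]
    _ ≤ (b-a)⁻¹ * (C^2 * ((b-a)⁻¹ * ∫ x in a..b, q.eval x ^ 2)) :=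
        mul_le_mul_of_nonneg_left key (inv_pos.mpr hba).le
    _ = C^2 / (b-a)^2 * ∫ t in a..b, q.eval t ^ 2 := by
        rw [div_eq_mul_inv, ← inv_pow]; ring



/-- `H¹(a,b)`-stability of the `L²(a,b)`-orthogonal projection onto polynomials of
degree at most `r`, with constant independent of the interval. -/
theorem proj_H1_stability (r : ℕ) :
    ∃ C : ℝ, 0 < C ∧ ∀ a b : ℝ, a < b → ∀ ψ ψ' : ℝ → ℝ,
      (∀ t ∈ Set.Icc a b, HasDerivWithinAt ψ (ψ' t) (Set.Icc a b) t) →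
      ContinuousOn ψ' (Set.Icc a b) →
      ∀ q : Polynomial ℝ, q.natDegree ≤ r →
        (∀ p : Polynomial ℝ, p.natDegree ≤ r →
          (∫ t in a..b, (ψ t - q.eval t) * p.eval t) = 0) →
        (∫ t in a..b, (q.derivative.eval t) ^ 2) ≤ C ^ 2 * ∫ t in a..b, (ψ' t) ^ 2 := by
  obtain ⟨C, hC0, hC⟩ := inverse_scaled r
  refine ⟨C, hC0, fun a b hab ψ ψ' hψ hψ' q hqdeg hortho => ?_⟩
  have hba : (0:ℝ) < b - a := sub_pos.mpr hab
  have huIcc : Set.uIcc a b = Set.Icc a b := Set.uIcc_of_le hab.le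
  -- continuity of ψ
  have hψcont : ContinuousOn ψ (Set.Icc a b) := fun x hx =>
    (hψ x hx).continuousWithinAt
  -- basic integrability facts
  have iiψ' : IntervalIntegrable ψ' volume a b := by
    apply ContinuousOn.intervalIntegrable; rwa [huIcc]
  have iiψ'abs : IntervalIntegrable (fun t => |ψ' t|) volume a b := iiψ'.abs
  have iiψ'sq : IntervalIntegrable (fun t => (ψ' t)^2) volume a b := by
    apply ContinuousOn.intervalIntegrable; rw [huIcc]; exact hψ'.pow 2
  set c : ℝ := ψ a with hc
  set I1 : ℝ := ∫ t in a..b, |ψ' t| with hI1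
  set I2 : ℝ := ∫ t in a..b, (ψ' t)^2 with hI2
  have hI2nn : 0 ≤ I2 := intervalIntegral.integral_nonneg hab.le (fun u _ => sq_nonneg _)
  have hI1nn : 0 ≤ I1 := intervalIntegral.integral_nonneg hab.le (fun u _ => abs_nonneg _)
  -- pointwise bound from FTC
  have hpt : ∀ t ∈ Set.Icc a b, |ψ t - c| ≤ I1 := by
    intro t ht
    have hat : a ≤ t := ht.1
    have htb : t ≤ b := ht.2
    have hftc : (∫ x in a..t, ψ' x) = ψ t - ψ a := by
      apply intervalIntegral.integral_eq_sub_of_hasDeriv_right_of_le hat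
        (hψcont.mono (Set.Icc_subset_Icc_right htb))
      · intro x hx
        exact ((hψ x ⟨hx.1.le, hx.2.le.trans htb⟩).hasDerivAt
          (Icc_mem_nhds hx.1 (lt_of_lt_of_le hx.2 htb))).hasDerivWithinAt
      · exact iiψ'.mono_set (by rw [huIcc, Set.uIcc_of_le hat]; exact Set.Icc_subset_Icc_right htb)
    rw [hc, ← hftc]
    calc |∫ x in a..t, ψ' x| ≤ ∫ x in a..t, |ψ' x| :=
          intervalIntegral.abs_integral_le_integral_abs hat
      _ ≤ I1 := by
          apply intervalIntegral.integral_mono_interval le_rfl hat htb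
          · filter_upwards with x using abs_nonneg _
          · exact iiψ'abs
  -- Cauchy-Schwarz : I1^2 ≤ (b-a) * I2
  have hCS : I1^2 ≤ (b-a) * I2 := by
    have h0 : (0:ℝ) ≤ ∫ t in a..b, ((b-a) * |ψ' t| - I1)^2 :=
      intervalIntegral.integral_nonneg hab.le (fun u _ => sq_nonneg _)
    have hexp : ∀ t : ℝ, ((b-a) * |ψ' t| - I1)^2
        = (b-a)^2 * (ψ' t)^2 - (2*(b-a)*I1) * |ψ' t| + I1^2 := by
      intro t
      linear_combination (b-a)^2 * (sq_abs (ψ' t))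
    have hval : (∫ t in a..b, ((b-a) * |ψ' t| - I1)^2)
        = (b-a)^2 * I2 - 2*(b-a)*I1*I1 + (b-a)*I1^2 := by
      rw [intervalIntegral.integral_congr (fun t _ => hexp t)]
      rw [intervalIntegral.integral_add (by
            exact (iiψ'sq.const_mul _).sub (iiψ'abs.const_mul _))
          (intervalIntegrable_const),
        intervalIntegral.integral_sub (iiψ'sq.const_mul _) (iiψ'abs.const_mul _),
        intervalIntegral.integral_const_mul, intervalIntegral.integral_const_mul,
        intervalIntegral.integral_const, smul_eq_mul]
    rw [hval] at h0
    nlinarith [hba]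
  -- Poincaré : ∫ (ψ - c)^2 ≤ (b-a)^2 * I2
  have iiψc : IntervalIntegrable (fun t => (ψ t - c)^2) volume a b := by
    apply ContinuousOn.intervalIntegrable; rw [huIcc]
    exact ((hψcont.sub continuousOn_const).pow 2)
  have hPoin : (∫ t in a..b, (ψ t - c)^2) ≤ (b-a)^2 * I2 := by
    calc (∫ t in a..b, (ψ t - c)^2) ≤ ∫ _t in a..b, I1^2 := by
          apply intervalIntegral.integral_mono_on hab.le iiψc intervalIntegrable_const
          intro t ht
          have := hpt t ht
          nlinarith [abs_nonneg (ψ t - c), sq_abs (ψ t - c)]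
      _ = (b-a) * I1^2 := by rw [intervalIntegral.integral_const, smul_eq_mul]
      _ ≤ (b-a) * ((b-a) * I2) := by nlinarith [hCS, hba]
      _ = (b-a)^2 * I2 := by ring
  -- contraction : ∫ (g.eval)^2 ≤ ∫ (ψ - c)^2 , g := q - C c
  set g : ℝ[X] := q - Polynomial.C c with hg
  have hgdeg : g.natDegree ≤ r := by
    apply le_trans (Polynomial.natDegree_sub_le _ _)
    simp [hqdeg]
  have hgev : ∀ t : ℝ, g.eval t = q.eval t - c := by intro t; simp [hg]
  have hqcont : Continuous (fun t => q.eval t) := q.continuous_aeval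
  have iiG : IntervalIntegrable (fun t => (g.eval t)^2) volume a b :=
    (g.continuous_aeval.pow 2).intervalIntegrable a b
  have iieg : IntervalIntegrable (fun t => (ψ t - q.eval t) * g.eval t) volume a b := by
    apply ContinuousOn.intervalIntegrable; rw [huIcc]
    exact (hψcont.sub hqcont.continuousOn).mul g.continuous_aeval.continuousOn
  have iie2 : IntervalIntegrable (fun t => (ψ t - q.eval t)^2) volume a b := by
    apply ContinuousOn.intervalIntegrable; rw [huIcc]
    exact (hψcont.sub hqcont.continuousOn).pow 2
  have hG : (∫ t in a..b, (g.eval t)^2) ≤ ∫ t in a..b, (ψ t - c)^2 := by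
    have hid : ∀ t : ℝ, (ψ t - c)^2
        = (ψ t - q.eval t)^2 + (2 * ((ψ t - q.eval t) * g.eval t) + (g.eval t)^2) := by
      intro t; rw [hgev t]; ring
    have hsplit : (∫ t in a..b, (ψ t - c)^2)
        = (∫ t in a..b, (ψ t - q.eval t)^2)
          + (2 * (∫ t in a..b, (ψ t - q.eval t) * g.eval t) + ∫ t in a..b, (g.eval t)^2) := by
      rw [intervalIntegral.integral_congr (fun t _ => hid t)]
      rw [intervalIntegral.integral_add iie2 ((iieg.const_mul 2).add iiG),
        intervalIntegral.integral_add (iieg.const_mul 2) iiG,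
        intervalIntegral.integral_const_mul]
    have horth : (∫ t in a..b, (ψ t - q.eval t) * g.eval t) = 0 := hortho g hgdeg
    have he2 : 0 ≤ ∫ t in a..b, (ψ t - q.eval t)^2 :=
      intervalIntegral.integral_nonneg hab.le (fun u _ => sq_nonneg _)
    rw [hsplit, horth]
    linarith
  -- inverse inequality and conclusion
  have hderg : Polynomial.derivative g = Polynomial.derivative q := by
    rw [hg]; simp
  have hGnn : 0 ≤ ∫ t in a..b, (g.eval t)^2 :=
    intervalIntegral.integral_nonneg hab.le (fun u _ => sq_nonneg _)
  have hinv := hC a b hab g hgdeg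
  rw [hderg] at hinv
  have hfac : (0:ℝ) ≤ C^2 / (b-a)^2 := by positivity
  calc (∫ t in a..b, (q.derivative.eval t) ^ 2)
      ≤ C^2 / (b-a)^2 * ∫ t in a..b, (g.eval t)^2 := hinv
    _ ≤ C^2 / (b-a)^2 * ∫ t in a..b, (ψ t - c)^2 := mul_le_mul_of_nonneg_left hG hfac
    _ ≤ C^2 / (b-a)^2 * ((b-a)^2 * I2) := mul_le_mul_of_nonneg_left hPoin hfac
    _ = C^2 * I2 := by field_simp
    _ = C ^ 2 * ∫ t in a..b, (ψ' t) ^ 2 := by rw [hI2]
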